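/- For every Ω ∈ H_2 the following three identities hold: θ₁(Ω/2)·(θ₀(Ω)² + θ₄(Ω)² + θ₈(Ω)² + θ₁₂(Ω)²) = (θ₁(Ω)² + θ₉(Ω)²)·θ₀(Ω/2); θ₂(Ω/2)·(θ₀(Ω)² + θ₄(Ω)² + θ₈(Ω)² + θ₁₂(Ω)²) = (θ₂(Ω)² + θ₆(Ω)²)·θ₀(Ω/2); and θ₃(Ω/2)·(θ₀(Ω)² + θ₄(Ω)² + θ₈(Ω)² + θ₁₂(Ω)²) = (θ₃(Ω)² + θ₁₅(Ω)²)·θ₀(Ω/2). (These are the identities b'₁ = (b₁+b₉)/(1+b₄+b₈+b₁₂), b'₂ = (b₂+b₆)/(1+b₄+b₈+b₁₂), b'₃ = (b₃+b₁₅)/(1+b₄+b₈+b₁₂) with denominators cleared, where b_i(Ω) = θ_i(Ω)²/θ₀(Ω)² and b'_i(Ω) = θ_i(Ω/2)/θ₀(Ω/2).) -/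

import Mathlib

open Matrix

/-- The Siegel upper half-space: symmetric complex `g × g` matrices with positive
definite imaginary part. -/
def SiegelUpperHalf (g : ℕ) : Set (Matrix (Fin g) (Fin g) ℂ) :=
  {Ω | Ω.IsSymm ∧ (Matrix.of fun i j => (Ω i j).im).PosDef}

/-- The general term of the theta series with characteristic `(a, b)`. -/
noncomputable def thetaTerm (g : ℕ) (a b : Fin g → ℚ) (z : Fin g → ℂ)
    (Ω : Matrix (Fin g) (Fin g) ℂ) (n : Fin g → ℤ) : ℂ :=
  Complex.exp (Real.pi * Complex.I *
      ((fun i => (n i : ℂ) + (a i : ℂ)) ⬝ᵥ Ω.mulVec (fun i => (n i : ℂ) + (a i : ℂ)))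
    + 2 * Real.pi * Complex.I *
      ((fun i => (n i : ℂ) + (a i : ℂ)) ⬝ᵥ (fun i => z i + (b i : ℂ))))

/-- The theta function with characteristic `(a, b)`. -/
noncomputable def theta (g : ℕ) (a b : Fin g → ℚ) (z : Fin g → ℂ)
    (Ω : Matrix (Fin g) (Fin g) ℂ) : ℂ :=
  ∑' n : Fin g → ℤ, thetaTerm g a b z Ω n

/-- The genus-2 theta constant `θ_k` with `k = b₀ + 2b₁ + 4a₀ + 8a₁`,
i.e. `θ[a/2; b/2](0, Ω)` for `a, b ∈ {0,1}²`. -/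
noncomputable def thetaConst (k : ℕ) (Ω : Matrix (Fin 2) (Fin 2) ℂ) : ℂ :=
  theta 2 ![((k / 4 % 2 : ℕ) : ℚ) / 2, ((k / 8 % 2 : ℕ) : ℚ) / 2]
          ![((k % 2 : ℕ) : ℚ) / 2, ((k / 2 % 2 : ℕ) : ℚ) / 2] 0 Ω

open Complex Real

/-! ### Auxiliary lemmas -/

lemma term_prod_aux (Ω : Matrix (Fin 2) (Fin 2) ℂ) (b : Fin 2 → ℚ) (c : Fin 2 → ℤ)
    (j k : Fin 2 → ℤ) :
    thetaTerm 2 (fun i => (c i : ℚ)/2) b 0 Ω j * thetaTerm 2 (fun i => (c i : ℚ)/2) b 0 Ω k =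
    thetaTerm 2 0 b 0 ((2:ℂ)⁻¹ • Ω) (fun i => j i + k i + c i) *
      thetaTerm 2 0 0 0 ((2:ℂ)⁻¹ • Ω) (fun i => j i - k i) := by
  simp only [thetaTerm, ← Complex.exp_add]
  congr 1
  simp only [dotProduct, mulVec, Fin.sum_univ_two, Matrix.smul_apply, smul_eq_mul,
    Pi.zero_apply, zero_add, add_zero, Rat.cast_zero, Rat.cast_div, Rat.cast_intCast,
    Rat.cast_ofNat, Int.cast_add, Int.cast_sub]
  ring

lemma exp_odd_aux (x y : ℂ) (m : ℤ)
    (h : x = y + m*(2*Real.pi*Complex.I) + Real.pi*Complex.I) :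
    Complex.exp x = -Complex.exp y := by
  rw [h, Complex.exp_add, Complex.exp_add, Complex.exp_int_mul_two_pi_mul_I,
    Complex.exp_pi_mul_I]
  ring

lemma theta_vanish_aux (Ω : Matrix (Fin 2) (Fin 2) ℂ) (c d : Fin 2 → ℤ) (t : ℤ)
    (ht : c 0 * d 0 + c 1 * d 1 = 2 * t + 1) :
    theta 2 (fun i => (c i : ℚ)/2) (fun i => (d i : ℚ)/2) 0 Ω = 0 := by
  set a : Fin 2 → ℚ := fun i => (c i : ℚ)/2
  set b : Fin 2 → ℚ := fun i => (d i : ℚ)/2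
  set f : (Fin 2 → ℤ) → ℂ := thetaTerm 2 a b 0 Ω with hf
  have hinv : Function.Involutive (fun (n : Fin 2 → ℤ) => fun i => -n i - c i) := by
    intro n; funext i; ring
  set σ : Equiv.Perm (Fin 2 → ℤ) := Function.Involutive.toPerm _ hinv with hσ
  have h2 : ∀ n : Fin 2 → ℤ, f (σ n) = -f n := by
    intro n
    have htC : ((c 0 : ℂ) * d 0 + c 1 * d 1) = 2 * t + 1 := by
      exact_mod_cast ht
    simp only [hf, hσ, thetaTerm, Function.Involutive.coe_toPerm]
    apply exp_odd_aux _ _ (-(n 0 * d 0 + n 1 * d 1) - t - 1)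
    simp only [dotProduct, mulVec, Fin.sum_univ_two, Pi.zero_apply, zero_add, a, b]
    push_cast
    linear_combination (-(Real.pi) * Complex.I) * htC
  have h3 : ∑' n, f n = - ∑' n, f n := by
    calc ∑' n, f n = ∑' n, f (σ n) := (σ.tsum_eq f).symm
    _ = ∑' n, -f n := tsum_congr h2
    _ = - ∑' n, f n := tsum_neg
  rw [theta, ← hf]
  linear_combination h3 / 2

lemma norm_thetaTerm_aux (a b : Fin 2 → ℚ) (Ω : Matrix (Fin 2) (Fin 2) ℂ) (n : Fin 2 → ℤ) :
    ‖thetaTerm 2 a b 0 Ω n‖ = rexp (-Real.pi *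
      ( ((n 0 : ℝ) + a 0) * ((Ω 0 0).im * ((n 0 : ℝ) + a 0) + (Ω 0 1).im * ((n 1 : ℝ) + a 1))
      + ((n 1 : ℝ) + a 1) * ((Ω 1 0).im * ((n 0 : ℝ) + a 0)
        + (Ω 1 1).im * ((n 1 : ℝ) + a 1)))) := by
  rw [thetaTerm, Complex.norm_exp]
  congr 1
  simp only [dotProduct, mulVec, Fin.sum_univ_two, Pi.zero_apply, zero_add,
    Complex.add_re, Complex.mul_re, Complex.mul_im, Complex.add_im,
    Complex.I_re, Complex.I_im, Complex.ofReal_re, Complex.ofReal_im,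
    Complex.intCast_re, Complex.intCast_im, Complex.ratCast_re, Complex.ratCast_im,
    Complex.re_ofNat, Complex.im_ofNat]
  ring

lemma posdef_bound_aux {Y : Matrix (Fin 2) (Fin 2) ℝ} (h : Y.PosDef) :
    ∃ ε > 0, ∀ x : Fin 2 → ℝ, ε * ((x 0)^2 + (x 1)^2) ≤
      x 0 * (Y 0 0 * x 0 + Y 0 1 * x 1) + x 1 * (Y 1 0 * x 0 + Y 1 1 * x 1) := by
  have hsym : Y 1 0 = Y 0 1 := by
    simpa using congrFun (congrFun h.1 0) 1
  have hq : ∀ x : Fin 2 → ℝ, x ≠ 0 →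
      0 < x 0 * (Y 0 0 * x 0 + Y 0 1 * x 1) + x 1 * (Y 1 0 * x 0 + Y 1 1 * x 1) := by
    intro x hx
    have := h.dotProduct_mulVec_pos hx
    simpa [dotProduct, mulVec, Fin.sum_univ_two, mul_comm] using this
  have h00 : 0 < Y 0 0 := by
    have := hq ![1, 0] (by intro hx; simpa using congrFun hx 0)
    simpa using this
  have h11 : 0 < Y 1 1 := by
    have := hq ![0, 1] (by intro hx; simpa using congrFun hx 1)
    simpa using this
  set D : ℝ := Y 0 0 * Y 1 1 - Y 0 1 ^ 2 with hD
  have hDpos : 0 < D := by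
    have hne : (![Y 0 1, -(Y 0 0)] : Fin 2 → ℝ) ≠ 0 := by
      intro hx
      have := congrFun hx 1
      simp at this
      exact absurd this h00.ne'
    have := hq _ hne
    simp only [Matrix.cons_val_zero, Matrix.cons_val_one, Matrix.head_cons] at this
    rw [hsym] at this
    nlinarith [this, sq_nonneg (Y 0 1)]
  refine ⟨D / (2 * (Y 0 0 + Y 1 1)), by positivity, fun x => ?_⟩
  rw [div_mul_eq_mul_div, div_le_iff₀ (by positivity), hsym]
  nlinarith [sq_nonneg (Y 0 0 * x 0 + Y 0 1 * x 1), sq_nonneg (Y 1 1 * x 1 + Y 0 1 * x 0),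
    mul_nonneg hDpos.le (sq_nonneg (x 0)), mul_nonneg hDpos.le (sq_nonneg (x 1)), hsym, h00, h11]

set_option maxHeartbeats 1600000 in
lemma summable_norm_theta_aux (a b : Fin 2 → ℚ) (Ω : Matrix (Fin 2) (Fin 2) ℂ)
    (hpd : (Matrix.of fun i j => (Ω i j).im).PosDef) :
    Summable fun n : Fin 2 → ℤ => ‖thetaTerm 2 a b 0 Ω n‖ := by
  obtain ⟨ε, hε, hQ⟩ := posdef_bound_aux hpd
  set A : ℝ := max |(a 0 : ℝ)| |(a 1 : ℝ)| with hA
  have h1d : Summable (fun n : ℤ => rexp (-π * (ε * (n:ℝ)^2 - 2*(ε*A)*|(n:ℝ)|))) := by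
    have h := summable_pow_mul_jacobiTheta₂_term_bound (ε*A) hε 0
    simp only [pow_zero, one_mul, Int.cast_abs] at h
    exact h
  have h2d : Summable (fun p : ℤ × ℤ =>
      rexp (-π * (ε * (p.1:ℝ)^2 - 2*(ε*A)*|(p.1:ℝ)|)) *
      rexp (-π * (ε * (p.2:ℝ)^2 - 2*(ε*A)*|(p.2:ℝ)|))) :=
    h1d.mul_of_nonneg h1d (fun _ => (Real.exp_pos _).le) (fun _ => (Real.exp_pos _).le)
  have h2d' : Summable (fun n : Fin 2 → ℤ =>
      rexp (-π * (ε * ((n 0 : ℝ))^2 - 2*(ε*A)*|(n 0 : ℝ)|)) *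
      rexp (-π * (ε * ((n 1 : ℝ))^2 - 2*(ε*A)*|(n 1 : ℝ)|))) :=
    ((piFinTwoEquiv fun _ => ℤ).summable_iff).mpr h2d
  apply Summable.of_nonneg_of_le (fun n => norm_nonneg _) _ h2d'
  intro n
  rw [norm_thetaTerm_aux, ← Real.exp_add]
  apply Real.exp_le_exp.mpr
  have hv := hQ ![(n 0 : ℝ) + a 0, (n 1 : ℝ) + a 1]
  simp only [Matrix.of_apply, Matrix.cons_val_zero, Matrix.cons_val_one, Matrix.head_cons] at hv
  have e0 : (n 0 : ℝ)^2 - 2*A*|(n 0 : ℝ)| ≤ ((n 0 : ℝ) + a 0)^2 := by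
    nlinarith [neg_abs_le ((n 0 : ℝ) * (a 0 : ℝ)), abs_mul ((n 0 : ℝ)) ((a 0 : ℝ)),
      mul_nonneg (abs_nonneg ((n 0 : ℝ))) (sub_nonneg.mpr (le_max_left |(a 0 : ℝ)| |(a 1 : ℝ)|)),
      sq_nonneg ((a 0 : ℝ))]
  have e1 : (n 1 : ℝ)^2 - 2*A*|(n 1 : ℝ)| ≤ ((n 1 : ℝ) + a 1)^2 := by
    nlinarith [neg_abs_le ((n 1 : ℝ) * (a 1 : ℝ)), abs_mul ((n 1 : ℝ)) ((a 1 : ℝ)),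
      mul_nonneg (abs_nonneg ((n 1 : ℝ))) (sub_nonneg.mpr (le_max_right |(a 0 : ℝ)| |(a 1 : ℝ)|)),
      sq_nonneg ((a 1 : ℝ))]
  have key : ε*((n 0 : ℝ)^2 - 2*A*|(n 0 : ℝ)|) + ε*((n 1 : ℝ)^2 - 2*A*|(n 1 : ℝ)|) ≤
      ((n 0 : ℝ) + a 0) * ((Ω 0 0).im * ((n 0 : ℝ) + a 0) + (Ω 0 1).im * ((n 1 : ℝ) + a 1))
      + ((n 1 : ℝ) + a 1) * ((Ω 1 0).im * ((n 0 : ℝ) + a 0)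
        + (Ω 1 1).im * ((n 1 : ℝ) + a 1)) := by
    nlinarith [hv, mul_le_mul_of_nonneg_left e0 hε.le, mul_le_mul_of_nonneg_left e1 hε.le]
  nlinarith [mul_le_mul_of_nonneg_left key Real.pi_pos.le]

def pairEquiv : ((Fin 2 → ℤ) × (Fin 2 → ℤ)) ≃ ((Fin 2 → Bool) × ((Fin 2 → ℤ) × (Fin 2 → ℤ))) where
  toFun x := (fun i => decide ((x.1 i + x.2 i) % 2 = 1),
              (fun i => (x.1 i + x.2 i) / 2, fun i => (x.1 i - x.2 i) / 2))
  invFun y := (fun i => y.2.1 i + y.2.2 i + (if y.1 i then 1 else 0),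
               fun i => y.2.1 i - y.2.2 i)
  left_inv := by
    rintro ⟨m, n⟩
    refine Prod.ext (funext fun i => ?_) (funext fun i => ?_) <;> dsimp only
    · rcases Int.emod_two_eq_zero_or_one (m i + n i) with h | h <;> simp [h] <;> omega
    · omega
  right_inv := by
    rintro ⟨e, j, k⟩
    refine Prod.ext (funext fun i => ?_)
      (Prod.ext (funext fun i => ?_) (funext fun i => ?_)) <;> dsimp only <;>
      rcases Bool.eq_false_or_eq_true (e i) with he | he <;> simp [he] <;> omega

noncomputable def avec (ε : Fin 2 → Bool) : Fin 2 → ℚ :=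
  fun i => ((if ε i then (1:ℤ) else 0 : ℤ) : ℚ)/2

set_option maxHeartbeats 1000000 in
lemma prod_formula_aux (Ω : Matrix (Fin 2) (Fin 2) ℂ)
    (hpd : (Matrix.of fun i j => (Ω i j).im).PosDef)
    (hpd' : (Matrix.of fun i j => ((((2:ℂ)⁻¹ • Ω)) i j).im).PosDef)
    (b : Fin 2 → ℚ) :
    theta 2 0 b 0 ((2:ℂ)⁻¹ • Ω) * theta 2 0 0 0 ((2:ℂ)⁻¹ • Ω) =
      ∑ ε : Fin 2 → Bool, theta 2 (avec ε) b 0 Ω ^ 2 := by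
  set Ω' := (2:ℂ)⁻¹ • Ω with hΩ'
  set F : ((Fin 2 → ℤ) × (Fin 2 → ℤ)) → ℂ :=
    fun x => thetaTerm 2 0 b 0 Ω' x.1 * thetaTerm 2 0 0 0 Ω' x.2 with hF
  have hFsum : Summable F :=
    summable_mul_of_summable_norm (summable_norm_theta_aux 0 b Ω' hpd')
      (summable_norm_theta_aux 0 0 Ω' hpd')
  have hG : ∀ y : ((Fin 2 → Bool) × ((Fin 2 → ℤ) × (Fin 2 → ℤ))),
      F (pairEquiv.symm y) =
        thetaTerm 2 (avec y.1) b 0 Ω y.2.1 * thetaTerm 2 (avec y.1) b 0 Ω y.2.2 := by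
    rintro ⟨ε, j, k⟩
    exact (term_prod_aux Ω b (fun i => if ε i then 1 else 0) j k).symm
  have hGsum : Summable fun y => F (pairEquiv.symm y) := pairEquiv.symm.summable_iff.mpr hFsum
  calc theta 2 0 b 0 Ω' * theta 2 0 0 0 Ω'
      = ∑' x : ((Fin 2 → ℤ) × (Fin 2 → ℤ)), F x :=
        tsum_mul_tsum_of_summable_norm (summable_norm_theta_aux 0 b Ω' hpd')
          (summable_norm_theta_aux 0 0 Ω' hpd')
    _ = ∑' y, F (pairEquiv.symm y) := (pairEquiv.symm.tsum_eq F).symm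
    _ = ∑' (ε : Fin 2 → Bool), ∑' (jk : (Fin 2 → ℤ) × (Fin 2 → ℤ)), F (pairEquiv.symm (ε, jk)) :=
        hGsum.tsum_prod
    _ = ∑ ε : Fin 2 → Bool, ∑' (jk : (Fin 2 → ℤ) × (Fin 2 → ℤ)), F (pairEquiv.symm (ε, jk)) :=
        tsum_fintype _
    _ = ∑ ε : Fin 2 → Bool, theta 2 (avec ε) b 0 Ω ^ 2 := by
        refine Finset.sum_congr rfl fun ε _ => ?_
        have h5 : ∑' (jk : (Fin 2 → ℤ) × (Fin 2 → ℤ)), F (pairEquiv.symm (ε, jk)) =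
            ∑' (jk : (Fin 2 → ℤ) × (Fin 2 → ℤ)),
              thetaTerm 2 (avec ε) b 0 Ω jk.1 * thetaTerm 2 (avec ε) b 0 Ω jk.2 :=
          tsum_congr fun jk => hG (ε, jk)
        rw [h5, ← tsum_mul_tsum_of_summable_norm (summable_norm_theta_aux (avec ε) b Ω hpd)
          (summable_norm_theta_aux (avec ε) b Ω hpd), theta, sq]

lemma half_pd_aux (Ω : Matrix (Fin 2) (Fin 2) ℂ)
    (hpd : (Matrix.of fun i j => (Ω i j).im).PosDef) :
    (Matrix.of fun i j => ((((2:ℂ)⁻¹ • Ω)) i j).im).PosDef := by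
  have key : ∀ i j, (Matrix.of fun i j => ((((2:ℂ)⁻¹ • Ω)) i j).im) i j
      = (2⁻¹:ℝ) * (Matrix.of fun i j => (Ω i j).im) i j := by
    intro i j
    simp only [Matrix.of_apply, Matrix.smul_apply, smul_eq_mul, Complex.mul_im]
    norm_num
  refine posDef_iff_dotProduct_mulVec.mpr ⟨?_, ?_⟩
  · ext i j
    have h1 : (Matrix.of fun i j => (Ω i j).im) j i = (Matrix.of fun i j => (Ω i j).im) i j := by
      conv_lhs => rw [← hpd.1]
      simp [conjTranspose_apply]
    simp only [conjTranspose_apply, star_trivial, key, h1]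
  · intro x hx
    have h2 := hpd.dotProduct_mulVec_pos hx
    simp only [dotProduct, mulVec, Fin.sum_univ_two, key,
      star, Pi.star_apply, star_trivial] at h2 ⊢
    nlinarith [h2]

lemma sum_bool_expand_aux (f : (Fin 2 → Bool) → ℂ) :
    ∑ ε : Fin 2 → Bool, f ε =
      f ![false,false] + f ![true,false] + f ![false,true] + f ![true,true] := by
  rw [show (Finset.univ : Finset (Fin 2 → Bool)) =
      {![false,false], ![true,false], ![false,true], ![true,true]} from by decide]
  rw [Finset.sum_insert (by decide), Finset.sum_insert (by decide),
    Finset.sum_insert (by decide), Finset.sum_singleton]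
  ring

lemma thetaConst_eq_aux (k : ℕ) (M : Matrix (Fin 2) (Fin 2) ℂ) (a b : Fin 2 → ℚ)
    (ha : ![((k / 4 % 2 : ℕ) : ℚ) / 2, ((k / 8 % 2 : ℕ) : ℚ) / 2] = a)
    (hb : ![((k % 2 : ℕ) : ℚ) / 2, ((k / 2 % 2 : ℕ) : ℚ) / 2] = b) :
    thetaConst k M = theta 2 a b 0 M := by rw [thetaConst, ha, hb]

lemma theta_vanish_aux' (Ω : Matrix (Fin 2) (Fin 2) ℂ) (a b : Fin 2 → ℚ) (c d : Fin 2 → ℤ)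
    (t : ℤ) (ht : c 0 * d 0 + c 1 * d 1 = 2 * t + 1)
    (ha : a = fun i => (c i : ℚ)/2) (hb : b = fun i => (d i : ℚ)/2) :
    theta 2 a b 0 Ω = 0 := by
  rw [ha, hb]; exact theta_vanish_aux Ω c d t ht

/-- The identities `b'ᵢ = (bᵢ + b_{σ(i)})/(1 + b₄ + b₈ + b₁₂)` with denominators cleared,
where `bᵢ(Ω) = θᵢ(Ω)²/θ₀(Ω)²` and `b'ᵢ(Ω) = θᵢ(Ω/2)/θ₀(Ω/2)`. -/
theorem bprime_in_terms_of_b (Ω : Matrix (Fin 2) (Fin 2) ℂ)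
    (hΩ : Ω ∈ SiegelUpperHalf 2) :
    thetaConst 1 ((2 : ℂ)⁻¹ • Ω) *
        (thetaConst 0 Ω ^ 2 + thetaConst 4 Ω ^ 2 + thetaConst 8 Ω ^ 2 +
          thetaConst 12 Ω ^ 2) =
      (thetaConst 1 Ω ^ 2 + thetaConst 9 Ω ^ 2) * thetaConst 0 ((2 : ℂ)⁻¹ • Ω) ∧
    thetaConst 2 ((2 : ℂ)⁻¹ • Ω) *
        (thetaConst 0 Ω ^ 2 + thetaConst 4 Ω ^ 2 + thetaConst 8 Ω ^ 2 +
          thetaConst 12 Ω ^ 2) =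
      (thetaConst 2 Ω ^ 2 + thetaConst 6 Ω ^ 2) * thetaConst 0 ((2 : ℂ)⁻¹ • Ω) ∧
    thetaConst 3 ((2 : ℂ)⁻¹ • Ω) *
        (thetaConst 0 Ω ^ 2 + thetaConst 4 Ω ^ 2 + thetaConst 8 Ω ^ 2 +
          thetaConst 12 Ω ^ 2) =
      (thetaConst 3 Ω ^ 2 + thetaConst 15 Ω ^ 2) * thetaConst 0 ((2 : ℂ)⁻¹ • Ω) := by
  obtain ⟨hsymm, hpd⟩ := hΩ
  have hpd' := half_pd_aux Ω hpd
  set M := (2:ℂ)⁻¹ • Ω with hM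
  -- avec values
  have aff : avec ![false,false] = (0 : Fin 2 → ℚ) := by
    funext i; fin_cases i <;> norm_num [avec]
  have atf : avec ![true,false] = ![(1:ℚ)/2, 0] := by
    funext i; fin_cases i <;> norm_num [avec]
  have aft : avec ![false,true] = ![(0:ℚ), 1/2] := by
    funext i; fin_cases i <;> norm_num [avec]
  have att : avec ![true,true] = ![(1:ℚ)/2, 1/2] := by
    funext i; fin_cases i <;> norm_num [avec]
  -- thetaConst conversions at M
  have c0M : thetaConst 0 M = theta 2 0 0 0 M :=
    thetaConst_eq_aux 0 M 0 0 (by funext i; fin_cases i <;> norm_num)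
      (by funext i; fin_cases i <;> norm_num)
  have c1M : thetaConst 1 M = theta 2 0 ![(1:ℚ)/2, 0] 0 M :=
    thetaConst_eq_aux 1 M 0 _ (by funext i; fin_cases i <;> norm_num)
      (by funext i; fin_cases i <;> norm_num)
  have c2M : thetaConst 2 M = theta 2 0 ![(0:ℚ), 1/2] 0 M :=
    thetaConst_eq_aux 2 M 0 _ (by funext i; fin_cases i <;> norm_num)
      (by funext i; fin_cases i <;> norm_num)
  have c3M : thetaConst 3 M = theta 2 0 ![(1:ℚ)/2, 1/2] 0 M :=
    thetaConst_eq_aux 3 M 0 _ (by funext i; fin_cases i <;> norm_num)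
      (by funext i; fin_cases i <;> norm_num)
  -- thetaConst conversions at Ω
  have c0' : thetaConst 0 Ω = theta 2 0 0 0 Ω :=
    thetaConst_eq_aux 0 Ω 0 0 (by funext i; fin_cases i <;> norm_num)
      (by funext i; fin_cases i <;> norm_num)
  have c4' : thetaConst 4 Ω = theta 2 ![(1:ℚ)/2, 0] 0 0 Ω :=
    thetaConst_eq_aux 4 Ω _ 0 (by funext i; fin_cases i <;> norm_num)
      (by funext i; fin_cases i <;> norm_num)
  have c8' : thetaConst 8 Ω = theta 2 ![(0:ℚ), 1/2] 0 0 Ω :=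
    thetaConst_eq_aux 8 Ω _ 0 (by funext i; fin_cases i <;> norm_num)
      (by funext i; fin_cases i <;> norm_num)
  have c12' : thetaConst 12 Ω = theta 2 ![(1:ℚ)/2, 1/2] 0 0 Ω :=
    thetaConst_eq_aux 12 Ω _ 0 (by funext i; fin_cases i <;> norm_num)
      (by funext i; fin_cases i <;> norm_num)
  have c1' : thetaConst 1 Ω = theta 2 0 ![(1:ℚ)/2, 0] 0 Ω :=
    thetaConst_eq_aux 1 Ω 0 _ (by funext i; fin_cases i <;> norm_num)
      (by funext i; fin_cases i <;> norm_num)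
  have c9' : thetaConst 9 Ω = theta 2 ![(0:ℚ), 1/2] ![(1:ℚ)/2, 0] 0 Ω :=
    thetaConst_eq_aux 9 Ω _ _ (by funext i; fin_cases i <;> norm_num)
      (by funext i; fin_cases i <;> norm_num)
  have c2' : thetaConst 2 Ω = theta 2 0 ![(0:ℚ), 1/2] 0 Ω :=
    thetaConst_eq_aux 2 Ω 0 _ (by funext i; fin_cases i <;> norm_num)
      (by funext i; fin_cases i <;> norm_num)
  have c6' : thetaConst 6 Ω = theta 2 ![(1:ℚ)/2, 0] ![(0:ℚ), 1/2] 0 Ω :=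
    thetaConst_eq_aux 6 Ω _ _ (by funext i; fin_cases i <;> norm_num)
      (by funext i; fin_cases i <;> norm_num)
  have c3' : thetaConst 3 Ω = theta 2 0 ![(1:ℚ)/2, 1/2] 0 Ω :=
    thetaConst_eq_aux 3 Ω 0 _ (by funext i; fin_cases i <;> norm_num)
      (by funext i; fin_cases i <;> norm_num)
  have c15' : thetaConst 15 Ω = theta 2 ![(1:ℚ)/2, 1/2] ![(1:ℚ)/2, 1/2] 0 Ω :=
    thetaConst_eq_aux 15 Ω _ _ (by funext i; fin_cases i <;> norm_num)
      (by funext i; fin_cases i <;> norm_num)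
  -- vanishing of odd theta constants
  have v5 : theta 2 ![(1:ℚ)/2, 0] ![(1:ℚ)/2, 0] 0 Ω = 0 :=
    theta_vanish_aux' Ω _ _ ![1,0] ![1,0] 0 (by decide)
      (by funext i; fin_cases i <;> norm_num) (by funext i; fin_cases i <;> norm_num)
  have v13 : theta 2 ![(1:ℚ)/2, 1/2] ![(1:ℚ)/2, 0] 0 Ω = 0 :=
    theta_vanish_aux' Ω _ _ ![1,1] ![1,0] 0 (by decide)
      (by funext i; fin_cases i <;> norm_num) (by funext i; fin_cases i <;> norm_num)
  have v10 : theta 2 ![(0:ℚ), 1/2] ![(0:ℚ), 1/2] 0 Ω = 0 :=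
    theta_vanish_aux' Ω _ _ ![0,1] ![0,1] 0 (by decide)
      (by funext i; fin_cases i <;> norm_num) (by funext i; fin_cases i <;> norm_num)
  have v14 : theta 2 ![(1:ℚ)/2, 1/2] ![(0:ℚ), 1/2] 0 Ω = 0 :=
    theta_vanish_aux' Ω _ _ ![1,1] ![0,1] 0 (by decide)
      (by funext i; fin_cases i <;> norm_num) (by funext i; fin_cases i <;> norm_num)
  have v7 : theta 2 ![(1:ℚ)/2, 0] ![(1:ℚ)/2, 1/2] 0 Ω = 0 :=
    theta_vanish_aux' Ω _ _ ![1,0] ![1,1] 0 (by decide)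
      (by funext i; fin_cases i <;> norm_num) (by funext i; fin_cases i <;> norm_num)
  have v11 : theta 2 ![(0:ℚ), 1/2] ![(1:ℚ)/2, 1/2] 0 Ω = 0 :=
    theta_vanish_aux' Ω _ _ ![0,1] ![1,1] 0 (by decide)
      (by funext i; fin_cases i <;> norm_num) (by funext i; fin_cases i <;> norm_num)
  -- product formulas
  have hden := prod_formula_aux Ω hpd hpd' 0
  rw [sum_bool_expand_aux, aff, atf, aft, att] at hden
  have h1 := prod_formula_aux Ω hpd hpd' ![(1:ℚ)/2, 0]
  rw [sum_bool_expand_aux, aff, atf, aft, att, v5, v13] at h1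
  have h2 := prod_formula_aux Ω hpd hpd' ![(0:ℚ), 1/2]
  rw [sum_bool_expand_aux, aff, atf, aft, att, v10, v14] at h2
  have h3 := prod_formula_aux Ω hpd hpd' ![(1:ℚ)/2, 1/2]
  rw [sum_bool_expand_aux, aff, atf, aft, att, v7, v11] at h3
  refine ⟨?_, ?_, ?_⟩
  · rw [c1M, c0M, c0', c4', c8', c12', c1', c9']
    linear_combination (theta 2 0 0 0 M) * h1 - (theta 2 0 ![(1:ℚ)/2, 0] 0 M) * hden
  · rw [c2M, c0M, c0', c4', c8', c12', c2', c6']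
    linear_combination (theta 2 0 0 0 M) * h2 - (theta 2 0 ![(0:ℚ), 1/2] 0 M) * hden
  · rw [c3M, c0M, c0', c4', c8', c12', c3', c15']
    linear_combination (theta 2 0 0 0 M) * h3 - (theta 2 0 ![(1:ℚ)/2, 1/2] 0 M) * hden
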